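/- For weakly compact convex sets P, Q of probability measures on a Polish space, JS(P,Q) = 0 if and only if P = Q. -/

import Mathlib

open MeasureTheory Real ENNReal Filter Topology
open scoped Classical

noncomputable def klDiv {X : Type*} [MeasurableSpace X] (μ ν : Measure X) : EReal :=
  if μ ≪ ν ∧ Integrable (fun x => Real.log (μ.rnDeriv ν x).toReal) μ
  then ((∫ x, Real.log (μ.rnDeriv ν x).toReal ∂μ : ℝ) : EReal)
  else ⊤

noncomputable def tvDist {X : Type*} [MeasurableSpace X] (μ ν : Measure X) : ℝ :=
  ⨆ A : {A : Set X // MeasurableSet A}, |(μ A).toReal - (ν A).toReal|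


noncomputable def genKL {X : Type*} [MeasurableSpace X]
    (P Q : Set (ProbabilityMeasure X)) : EReal :=
  ⨆ μ ∈ P, ⨅ ν ∈ Q, klDiv μ.toMeasure ν.toMeasure

noncomputable def genV {X : Type*} [MeasurableSpace X]
    (P Q : Set (ProbabilityMeasure X)) : ℝ :=
  max (⨆ μ : P, ⨅ ν : Q, tvDist μ.1.toMeasure ν.1.toMeasure)
      (⨆ ν : Q, ⨅ μ : P, tvDist μ.1.toMeasure ν.1.toMeasure)

def ConvexPM {X : Type*} [MeasurableSpace X] (P : Set (ProbabilityMeasure X)) : Prop :=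
  ∀ μ ∈ P, ∀ ν ∈ P, ∀ a b : ℝ≥0∞, a + b = 1 →
    ∃ κ ∈ P, κ.toMeasure = a • μ.toMeasure + b • ν.toMeasure

def midSet {X : Type*} [MeasurableSpace X]
    (P Q : Set (ProbabilityMeasure X)) : Set (ProbabilityMeasure X) :=
  {κ | ∃ μ ∈ P, ∃ ν ∈ Q, κ.toMeasure = (2:ℝ≥0∞)⁻¹ • μ.toMeasure + (2:ℝ≥0∞)⁻¹ • ν.toMeasure}

noncomputable def genJS {X : Type*} [MeasurableSpace X]
    (P Q : Set (ProbabilityMeasure X)) : EReal :=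
  ((1/2 : ℝ) : EReal) * genKL P (midSet P Q) + ((1/2 : ℝ) : EReal) * genKL Q (midSet P Q)

/-! ### Auxiliary material -/

open scoped BoundedContinuousFunction

namespace GenJSAux

/-- Elementary inequality: `x log x - x + 1 ≥ (√x - 1)²`. -/
lemma phi_ge_sq (x : ℝ) (hx : 0 ≤ x) :
    (Real.sqrt x - 1)^2 ≤ x * Real.log x - x + 1 := by
  rcases eq_or_lt_of_le hx with h | h
  · simp [← h]
  · set s := Real.sqrt x with hs
    have hs0 : 0 < s := Real.sqrt_pos.mpr h
    have hlog : Real.log s ≥ 1 - 1/s := by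
      have := Real.log_le_sub_one_of_pos (show (0:ℝ) < 1/s by positivity)
      rw [Real.log_div one_ne_zero (ne_of_gt hs0), Real.log_one] at this
      linarith
    have hx2 : x = s^2 := (Real.sq_sqrt hx).symm
    have hlx : Real.log (s^2) = 2 * Real.log s := by
      rw [Real.log_pow]; push_cast; ring
    rw [hx2, hlx]
    have key : s^2 * (1 - 1/s) = s^2 - s := by field_simp
    have h2 := mul_le_mul_of_nonneg_left hlog (sq_nonneg s)
    rw [key] at h2
    nlinarith [sq_nonneg (s - 1)]

/-- Quantitative (Pinsker-like) pointwise inequality. -/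
lemma abs_sub_one_le (x : ℝ) (hx : 0 ≤ x) {ε : ℝ} (hε : 0 < ε) :
    |x - 1| ≤ ε + (9/ε + 3) * (x * Real.log x - x + 1) := by
  have hphi := phi_ge_sq x hx
  have hphi0 : 0 ≤ x * Real.log x - x + 1 := le_trans (sq_nonneg _) hphi
  have hs : Real.sqrt x ^ 2 = x := Real.sq_sqrt hx
  have hsnn : 0 ≤ Real.sqrt x := Real.sqrt_nonneg x
  have hC : 0 ≤ (9/ε + 3) * (x * Real.log x - x + 1) := by positivity
  rcases le_or_gt x 4 with h4 | h4
  · have hsle : Real.sqrt x ≤ 2 := by nlinarith [hs]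
    have h9 : (x-1)^2 ≤ 9 * (x * Real.log x - x + 1) := by
      have hfac : (x - 1)^2 = (Real.sqrt x - 1)^2 * (Real.sqrt x + 1)^2 := by nlinarith [hs]
      nlinarith [sq_nonneg (Real.sqrt x - 1)]
    rcases le_or_gt (|x-1|) ε with h | h
    · linarith
    · have h1 : |x-1| ≤ (x-1)^2 / ε := by
        rw [le_div_iff₀ hε]
        nlinarith [sq_abs (x-1), abs_nonneg (x-1)]
      have h2 : (x-1)^2/ε ≤ 9 * (x * Real.log x - x + 1) / ε := by gcongr
      have h3 : 9 * (x * Real.log x - x + 1) / ε = 9/ε * (x * Real.log x - x + 1) := by ring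
      nlinarith
  · have hsge : 2 ≤ Real.sqrt x := by nlinarith [hs, hsnn]
    have h1 : x - 1 ≤ 3 * (Real.sqrt x - 1)^2 := by nlinarith [hs]
    have habs : |x-1| = x - 1 := abs_of_nonneg (by linarith)
    have hεφ : 0 ≤ 9/ε * (x * Real.log x - x + 1) := by positivity
    rw [habs]
    nlinarith

set_option linter.unusedSectionVars false

variable {X : Type*} [MeasurableSpace X] {μ κ : Measure X}

section KL
variable [IsProbabilityMeasure μ] [IsProbabilityMeasure κ]

lemma hg_int : Integrable (fun x => (μ.rnDeriv κ x).toReal) κ :=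
  Measure.integrable_toReal_rnDeriv

lemma hg_one (hac : μ ≪ κ) : ∫ x, (μ.rnDeriv κ x).toReal ∂κ = 1 := by
  rw [Measure.integral_toReal_rnDeriv hac]; simp

lemma hmul_int (hac : μ ≪ κ)
    (hint : Integrable (fun x => Real.log (μ.rnDeriv κ x).toReal) μ) :
    Integrable (fun x => (μ.rnDeriv κ x).toReal * Real.log (μ.rnDeriv κ x).toReal) κ := by
  simpa [smul_eq_mul] using (integrable_rnDeriv_smul_iff hac).mpr hint

lemma hmul_eq (hac : μ ≪ κ) :
    ∫ x, (μ.rnDeriv κ x).toReal * Real.log (μ.rnDeriv κ x).toReal ∂κ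
      = ∫ x, Real.log (μ.rnDeriv κ x).toReal ∂μ := by
  simpa [smul_eq_mul] using
    integral_rnDeriv_smul hac (f := fun x => Real.log (μ.rnDeriv κ x).toReal)

lemma integral_log_rnDeriv_nonneg (hac : μ ≪ κ)
    (hint : Integrable (fun x => Real.log (μ.rnDeriv κ x).toReal) μ) :
    0 ≤ ∫ x, Real.log (μ.rnDeriv κ x).toReal ∂μ := by
  rw [← hmul_eq hac]
  have hGint : Integrable (fun x => (μ.rnDeriv κ x).toReal) κ := hg_int (μ := μ)
  have h1 : ∫ x, ((μ.rnDeriv κ x).toReal - 1) ∂κ = 0 := by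
    rw [integral_sub hGint (integrable_const 1), hg_one hac]
    simp
  rw [← h1]
  refine integral_mono (hGint.sub (integrable_const 1)) (hmul_int hac hint) (fun x => ?_)
  have := phi_ge_sq ((μ.rnDeriv κ x).toReal) ENNReal.toReal_nonneg
  nlinarith [sq_nonneg (Real.sqrt ((μ.rnDeriv κ x).toReal) - 1)]

lemma klDiv_nonneg' : (0:EReal) ≤ klDiv μ κ := by
  rw [klDiv]
  split_ifs with h
  · exact_mod_cast integral_log_rnDeriv_nonneg h.1 h.2
  · exact le_top

lemma klDiv_self' {ν : Measure X} [IsProbabilityMeasure ν] : klDiv ν ν = 0 := by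
  have hae : (fun x => Real.log (ν.rnDeriv ν x).toReal) =ᵐ[ν] fun _ => 0 := by
    filter_upwards [Measure.rnDeriv_self ν] with x hx
    simp [hx]
  have hint : Integrable (fun x => Real.log (ν.rnDeriv ν x).toReal) ν :=
    (integrable_const (0:ℝ)).congr hae.symm
  rw [klDiv, if_pos ⟨Measure.AbsolutelyContinuous.rfl, hint⟩, integral_congr_ae hae]
  simp

lemma pinsker_like (hac : μ ≪ κ)
    (hint : Integrable (fun x => Real.log (μ.rnDeriv κ x).toReal) μ) {ε : ℝ} (hε : 0 < ε) :
    ∫ x, |(μ.rnDeriv κ x).toReal - 1| ∂κ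
      ≤ ε + (9/ε + 3) * ∫ x, Real.log (μ.rnDeriv κ x).toReal ∂μ := by
  have hmi := hmul_int hac hint
  have hGint : Integrable (fun x => (μ.rnDeriv κ x).toReal) κ := hg_int (μ := μ)
  have habs : Integrable (fun x => |(μ.rnDeriv κ x).toReal - 1|) κ :=
    (hGint.sub (integrable_const 1)).abs
  have h2 : Integrable (fun x => (9/ε + 3) *
      ((μ.rnDeriv κ x).toReal * Real.log (μ.rnDeriv κ x).toReal - (μ.rnDeriv κ x).toReal + 1)) κ :=
    (((hmi.sub hGint)).add (integrable_const 1)).const_mul _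
  have hrhs : Integrable (fun x => ε + (9/ε + 3) *
      ((μ.rnDeriv κ x).toReal * Real.log (μ.rnDeriv κ x).toReal - (μ.rnDeriv κ x).toReal + 1)) κ :=
    (integrable_const ε).add h2
  have hmono := integral_mono habs hrhs (fun x =>
    abs_sub_one_le ((μ.rnDeriv κ x).toReal) ENNReal.toReal_nonneg hε)
  refine hmono.trans (le_of_eq ?_)
  have e1 := integral_add (μ := κ) (integrable_const ε) h2
  have e2 := integral_const_mul (μ := κ) (9/ε + 3) (fun x =>
      ((μ.rnDeriv κ x).toReal * Real.log (μ.rnDeriv κ x).toReal - (μ.rnDeriv κ x).toReal + 1))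
  have h3 : Integrable (fun x => (μ.rnDeriv κ x).toReal * Real.log (μ.rnDeriv κ x).toReal
      - (μ.rnDeriv κ x).toReal) κ := hmi.sub hGint
  have e3 := integral_add (μ := κ) h3 (integrable_const (1:ℝ))
  have e4 := integral_sub hmi hGint
  rw [e1, e2, e3, e4, hmul_eq hac, hg_one hac]
  simp

lemma abs_integral_sub_le [TopologicalSpace X] [OpensMeasurableSpace X] (hac : μ ≪ κ)
    (hint : Integrable (fun x => Real.log (μ.rnDeriv κ x).toReal) μ) (f : X →ᵇ ℝ)
    {ε : ℝ} (hε : 0 < ε) :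
    |(∫ x, f x ∂μ) - ∫ x, f x ∂κ|
      ≤ ‖f‖ * (ε + (9/ε + 3) * ∫ x, Real.log (μ.rnDeriv κ x).toReal ∂μ) := by
  have hGint : Integrable (fun x => (μ.rnDeriv κ x).toReal) κ := hg_int (μ := μ)
  have hfκ : Integrable (fun x => f x) κ := f.integrable κ
  have hgf : Integrable (fun x => (μ.rnDeriv κ x).toReal * f x) κ := by
    simpa [smul_eq_mul] using (integrable_rnDeriv_smul_iff hac).mpr (f.integrable μ)
  have heq : ∫ x, f x ∂μ = ∫ x, (μ.rnDeriv κ x).toReal * f x ∂κ := by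
    simpa [smul_eq_mul] using (integral_rnDeriv_smul hac (f := fun x => f x)).symm
  rw [heq, ← integral_sub hgf hfκ]
  have hb : |∫ x, ((μ.rnDeriv κ x).toReal * f x - f x) ∂κ|
      ≤ ∫ x, |(μ.rnDeriv κ x).toReal * f x - f x| ∂κ := by
    simpa using norm_integral_le_integral_norm (fun x => (μ.rnDeriv κ x).toReal * f x - f x) (μ := κ)
  refine hb.trans ?_
  have habs : Integrable (fun x => |(μ.rnDeriv κ x).toReal * f x - f x|) κ := (hgf.sub hfκ).abs
  have hbd : Integrable (fun x => |(μ.rnDeriv κ x).toReal - 1| * ‖f‖) κ :=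
    ((hGint.sub (integrable_const 1)).abs.mul_const _)
  have hmono := integral_mono habs hbd (fun x => by
    have h1 : (μ.rnDeriv κ x).toReal * f x - f x = ((μ.rnDeriv κ x).toReal - 1) * f x := by ring
    rw [h1, abs_mul]
    exact mul_le_mul_of_nonneg_left (f.norm_coe_le_norm x) (abs_nonneg _))
  refine hmono.trans ?_
  rw [integral_mul_const, mul_comm]
  exact mul_le_mul_of_nonneg_left (pinsker_like hac hint hε) (norm_nonneg f)

end KL

/-! ### Midpoints -/

noncomputable def midPM (μ ν : ProbabilityMeasure X) : ProbabilityMeasure X :=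
  ⟨(2:ℝ≥0∞)⁻¹ • μ.toMeasure + (2:ℝ≥0∞)⁻¹ • ν.toMeasure, by
    constructor
    simp [Measure.add_apply, Measure.smul_apply, smul_eq_mul, ENNReal.inv_two_add_inv_two]⟩

lemma midPM_toMeasure (μ ν : ProbabilityMeasure X) :
    (midPM μ ν).toMeasure = (2:ℝ≥0∞)⁻¹ • μ.toMeasure + (2:ℝ≥0∞)⁻¹ • ν.toMeasure := rfl

lemma midSet_eq (P Q : Set (ProbabilityMeasure X)) :
    midSet P Q
      = (fun p : ProbabilityMeasure X × ProbabilityMeasure X => midPM p.1 p.2) '' (P ×ˢ Q) := by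
  ext κ
  constructor
  · rintro ⟨μ, hμ, ν, hν, h⟩
    exact ⟨(μ, ν), ⟨hμ, hν⟩, ProbabilityMeasure.toMeasure_injective (by rw [midPM_toMeasure, h])⟩
  · rintro ⟨⟨μ, ν⟩, ⟨hμ, hν⟩, rfl⟩
    exact ⟨μ, hμ, ν, hν, rfl⟩

section Topology
variable [TopologicalSpace X] [OpensMeasurableSpace X]

lemma integral_midPM (μ ν : ProbabilityMeasure X) (f : X →ᵇ ℝ) :
    ∫ x, f x ∂(midPM μ ν).toMeasure
      = 2⁻¹ * ∫ x, f x ∂μ.toMeasure + 2⁻¹ * ∫ x, f x ∂ν.toMeasure := by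
  rw [midPM_toMeasure, integral_add_measure ((f.integrable _).smul_measure (by simp))
    ((f.integrable _).smul_measure (by simp)), integral_smul_measure, integral_smul_measure]
  simp [ENNReal.toReal_inv, smul_eq_mul]

lemma continuous_midPM :
    Continuous (fun p : ProbabilityMeasure X × ProbabilityMeasure X => midPM p.1 p.2) := by
  rw [continuous_iff_continuousAt]
  intro p
  unfold ContinuousAt
  rw [ProbabilityMeasure.tendsto_iff_forall_integral_tendsto]
  intro f
  simp only [integral_midPM]
  have h1 : Continuous (fun q : ProbabilityMeasure X × ProbabilityMeasure X =>
      2⁻¹ * ∫ x, f x ∂q.1.toMeasure + 2⁻¹ * ∫ x, f x ∂q.2.toMeasure) := by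
    apply Continuous.add <;> exact (continuous_const.mul
      ((ProbabilityMeasure.continuous_integral_boundedContinuousFunction f).comp (by continuity)))
  exact h1.tendsto p

lemma isCompact_midSet {P Q : Set (ProbabilityMeasure X)} (hP : IsCompact P) (hQ : IsCompact Q) :
    IsCompact (midSet P Q) := by
  rw [midSet_eq]
  exact (hP.prod hQ).image continuous_midPM

end Topology

section Iterate
variable [TopologicalSpace X] [PolishSpace X] [BorelSpace X]

lemma two_pow_cast_succ (n : ℕ) : ((2^(n+1) - 1 : ℕ) : ℝ≥0∞) = 2 * ((2^n - 1 : ℕ) : ℝ≥0∞) + 1 := by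
  have h : (2^(n+1) - 1 : ℕ) = 2 * (2^n - 1) + 1 := by
    have := Nat.one_le_two_pow (n := n); omega
  rw [h]; push_cast; ring

lemma subset_of_mid_decomp {A B : Set (ProbabilityMeasure X)} (hBne : B.Nonempty)
    (hBc : IsCompact B) (hBconv : ConvexPM B)
    (h : ∀ μ ∈ A, ∃ m ∈ A, ∃ t ∈ B,
      μ.toMeasure = (2:ℝ≥0∞)⁻¹ • m.toMeasure + (2:ℝ≥0∞)⁻¹ • t.toMeasure) :
    A ⊆ B := by
  intro μ0 hμ0
  have key : ∀ n : ℕ, ∃ m ∈ A, ∃ t ∈ B,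
      ((2:ℝ≥0∞)^n) • μ0.toMeasure
        = m.toMeasure + (((2^n - 1 : ℕ)) : ℝ≥0∞) • t.toMeasure := by
    intro n
    induction n with
    | zero =>
      obtain ⟨t, ht⟩ := hBne
      exact ⟨μ0, hμ0, t, ht, by simp⟩
    | succ n ih =>
      obtain ⟨m, hm, t, ht, hinv⟩ := ih
      obtain ⟨m', hm', t', ht', hmid⟩ := h m hm
      set N : ℝ≥0∞ := ((2^(n+1) - 1 : ℕ) : ℝ≥0∞) with hN
      have hN0 : N ≠ 0 := by
        rw [hN]
        simp only [ne_eq, Nat.cast_eq_zero]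
        have := Nat.one_le_two_pow (n := n+1); omega
      have hNt : N ≠ ⊤ := by rw [hN]; exact ENNReal.natCast_ne_top _
      have hsum : ((2 * (2^n - 1) : ℕ) : ℝ≥0∞) / N + 1 / N = 1 := by
        rw [ENNReal.div_add_div_same]
        rw [show ((2 * (2^n - 1) : ℕ) : ℝ≥0∞) + 1 = N by
          rw [hN, two_pow_cast_succ]; push_cast; ring]
        exact ENNReal.div_self hN0 hNt
      obtain ⟨τ, hτ, hτeq⟩ := hBconv t ht t' ht'
        (((2 * (2^n - 1) : ℕ) : ℝ≥0∞) / N) (1 / N) hsum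
      refine ⟨m', hm', τ, hτ, ?_⟩
      have hτ2 : N • τ.toMeasure
          = ((2 * (2^n - 1) : ℕ) : ℝ≥0∞) • t.toMeasure + t'.toMeasure := by
        rw [hτeq, smul_add, smul_smul, smul_smul, ENNReal.mul_div_cancel hN0 hNt,
          mul_one_div, ENNReal.div_self hN0 hNt, one_smul]
      have h2 : (2:ℝ≥0∞) • m.toMeasure = m'.toMeasure + t'.toMeasure := by
        rw [hmid, smul_add, smul_smul, smul_smul,
          ENNReal.mul_inv_cancel two_ne_zero ENNReal.ofNat_ne_top, one_smul, one_smul]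
      calc ((2:ℝ≥0∞)^(n+1)) • μ0.toMeasure
          = (2:ℝ≥0∞) • (((2:ℝ≥0∞)^n) • μ0.toMeasure) := by
            rw [smul_smul, pow_succ, mul_comm]
        _ = (2:ℝ≥0∞) • m.toMeasure + ((2:ℝ≥0∞) * ((2^n - 1 : ℕ) : ℝ≥0∞)) • t.toMeasure := by
            rw [hinv, smul_add, smul_smul]
        _ = m'.toMeasure + t'.toMeasure + ((2 * (2^n - 1) : ℕ) : ℝ≥0∞) • t.toMeasure := by
            rw [h2]; push_cast; ring_nf
        _ = m'.toMeasure + N • τ.toMeasure := by rw [hτ2]; abel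
  choose m hm t ht hinv using key
  have habs : ∀ (μ : ProbabilityMeasure X) (f : X →ᵇ ℝ), |∫ x, f x ∂μ.toMeasure| ≤ ‖f‖ :=
    fun μ f => by simpa using f.norm_integral_le_norm μ.toMeasure
  have htend : Tendsto t atTop (𝓝 μ0) := by
    rw [ProbabilityMeasure.tendsto_iff_forall_integral_tendsto]
    intro f
    have hbound : ∀ n : ℕ, 1 ≤ n →
        |(∫ x, f x ∂(t n).toMeasure) - ∫ x, f x ∂μ0.toMeasure| ≤ 2 * ‖f‖ / ((2:ℝ)^n - 1) := by
      intro n hn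
      have hcast : ((2^n - 1 : ℕ) : ℝ) = (2:ℝ)^n - 1 := by
        rw [Nat.cast_sub (Nat.one_le_two_pow)]; push_cast; ring
      have h1 : ∫ x, f x ∂(((2:ℝ≥0∞)^n) • μ0.toMeasure)
          = (2:ℝ)^n * ∫ x, f x ∂μ0.toMeasure := by
        rw [integral_smul_measure]; simp [smul_eq_mul]
      have h2 : ∫ x, f x ∂((m n).toMeasure + (((2^n - 1 : ℕ)) : ℝ≥0∞) • (t n).toMeasure)
          = (∫ x, f x ∂(m n).toMeasure) + ((2:ℝ)^n - 1) * ∫ x, f x ∂(t n).toMeasure := by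
        rw [integral_add_measure (f.integrable _)
          ((f.integrable _).smul_measure (ENNReal.natCast_ne_top _)), integral_smul_measure]
        simp only [smul_eq_mul, ENNReal.toReal_natCast, hcast]
      rw [hinv n] at h1
      rw [h2] at h1
      set a := ∫ x, f x ∂μ0.toMeasure
      set b := ∫ x, f x ∂(m n).toMeasure
      set c := ∫ x, f x ∂(t n).toMeasure
      have hp : (1:ℝ) ≤ (2:ℝ)^n - 1 := by
        have : (2:ℝ)^1 ≤ (2:ℝ)^n := pow_le_pow_right₀ one_le_two hn
        norm_num at this; linarith
      have hpos : (0:ℝ) < (2:ℝ)^n - 1 := lt_of_lt_of_le one_pos hp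
      have hceq : c - a = (a - b) / ((2:ℝ)^n - 1) := by
        field_simp
        nlinarith [h1]
      rw [hceq, abs_div, abs_of_pos hpos]
      gcongr
      calc |a - b| ≤ |a| + |b| := abs_sub _ _
        _ ≤ ‖f‖ + ‖f‖ := add_le_add (habs μ0 f) (habs (m n) f)
        _ = 2 * ‖f‖ := by ring
    have hg : Tendsto (fun n : ℕ => 2 * ‖f‖ / ((2:ℝ)^n - 1)) atTop (𝓝 0) := by
      have h1 : Tendsto (fun n : ℕ => (2:ℝ)^n - 1) atTop atTop :=
        tendsto_atTop_add_const_right _ _ (tendsto_pow_atTop_atTop_of_one_lt one_lt_two)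
      simpa [div_eq_mul_inv] using (h1.inv_tendsto_atTop).const_mul (2 * ‖f‖)
    have h0 : Tendsto (fun n => (∫ x, f x ∂(t n).toMeasure) - ∫ x, f x ∂μ0.toMeasure)
        atTop (𝓝 0) := by
      apply squeeze_zero_norm' ?_ hg
      filter_upwards [eventually_ge_atTop 1] with n hn
      simpa [Real.norm_eq_abs] using hbound n hn
    have := h0.add_const (∫ x, f x ∂μ0.toMeasure)
    simpa using this
  exact hBc.isClosed.mem_of_tendsto htend (Filter.Eventually.of_forall ht)

/-- If the infimum of KL over a compact set is zero, the reference measure lies in the set. -/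
lemma mem_of_inf_klDiv_eq_zero {M : Set (ProbabilityMeasure X)} (hMc : IsCompact M)
    (μ : ProbabilityMeasure X)
    (hinf : (⨅ ν ∈ M, klDiv μ.toMeasure ν.toMeasure) = 0) : μ ∈ M := by
  have hseq : ∀ k : ℕ, ∃ κ ∈ M, ∀ f : X →ᵇ ℝ,
      |(∫ x, f x ∂μ.toMeasure) - ∫ x, f x ∂κ.toMeasure| ≤ ‖f‖ * (1/(k+1)) := by
    intro k
    set δ : ℝ := 1/(k+1) with hδdef
    have hδ : 0 < δ := by positivity
    set η : ℝ := (δ/2) / (9/(δ/2) + 3) with hηdef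
    have hη : 0 < η := by positivity
    have hlt : (⨅ ν ∈ M, klDiv μ.toMeasure ν.toMeasure) < ((η : ℝ) : EReal) := by
      rw [hinf]; exact_mod_cast hη
    obtain ⟨κ, hκlt⟩ := iInf_lt_iff.mp hlt
    obtain ⟨hκM, hκ⟩ := iInf_lt_iff.mp hκlt
    rw [klDiv] at hκ
    split_ifs at hκ with hc
    · obtain ⟨hac, hint⟩ := hc
      have hI : ∫ x, Real.log (μ.toMeasure.rnDeriv κ.toMeasure x).toReal ∂μ.toMeasure < η := by
        exact_mod_cast hκ
      refine ⟨κ, hκM, fun f => ?_⟩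
      have hb := abs_integral_sub_le hac hint f (ε := δ/2) (by positivity)
      refine hb.trans ?_
      have h9 : (0:ℝ) < 9/(δ/2) + 3 := by positivity
      have hηmul : (9/(δ/2) + 3) * η = δ/2 := by
        rw [hηdef]; field_simp
      have hstep : δ/2 + (9/(δ/2) + 3) *
          ∫ x, Real.log (μ.toMeasure.rnDeriv κ.toMeasure x).toReal ∂μ.toMeasure
            ≤ δ/2 + (9/(δ/2) + 3) * η := by
        have := mul_le_mul_of_nonneg_left hI.le h9.le
        linarith
      calc ‖f‖ * (δ/2 + (9/(δ/2) + 3) *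
            ∫ x, Real.log (μ.toMeasure.rnDeriv κ.toMeasure x).toReal ∂μ.toMeasure)
          ≤ ‖f‖ * (δ/2 + (9/(δ/2) + 3) * η) :=
            mul_le_mul_of_nonneg_left hstep (norm_nonneg f)
        _ = ‖f‖ * δ := by rw [hηmul]; ring
        _ = ‖f‖ * (1/(k+1)) := by rw [hδdef]
    · exact absurd hκ (by simp)
  choose κ hκM hκ using hseq
  have htend : Tendsto κ atTop (𝓝 μ) := by
    rw [ProbabilityMeasure.tendsto_iff_forall_integral_tendsto]
    intro f
    have hg : Tendsto (fun k : ℕ => ‖f‖ * (1/((k:ℝ)+1))) atTop (𝓝 0) := by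
      have h1 : Tendsto (fun k : ℕ => (k:ℝ)+1) atTop atTop :=
        tendsto_atTop_add_const_right _ _ tendsto_natCast_atTop_atTop
      simpa [div_eq_mul_inv] using (h1.inv_tendsto_atTop).const_mul ‖f‖
    have h0 : Tendsto (fun k => (∫ x, f x ∂(κ k).toMeasure) - ∫ x, f x ∂μ.toMeasure)
        atTop (𝓝 0) := by
      apply squeeze_zero_norm' ?_ hg
      filter_upwards with k
      rw [Real.norm_eq_abs, abs_sub_comm]
      exact_mod_cast hκ k f
    have := h0.add_const (∫ x, f x ∂μ.toMeasure)
    simpa using this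
  exact hMc.isClosed.mem_of_tendsto htend (Filter.Eventually.of_forall hκM)

end Iterate

lemma genKL_nonneg {P M : Set (ProbabilityMeasure X)} (hPne : P.Nonempty) :
    (0:EReal) ≤ genKL P M := by
  obtain ⟨μ0, hμ0⟩ := hPne
  exact le_iSup₂_of_le μ0 hμ0 (le_iInf₂ fun ν _ => klDiv_nonneg')

end GenJSAux

open GenJSAux

theorem genJS_eq_zero_iff {X : Type*} [MeasurableSpace X] [TopologicalSpace X]
    [PolishSpace X] [BorelSpace X] (P Q : Set (ProbabilityMeasure X))
    (hPne : P.Nonempty) (hQne : Q.Nonempty) (hPc : IsCompact P) (hQc : IsCompact Q)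
    (hPconv : ConvexPM P) (hQconv : ConvexPM Q) :
    genJS P Q = 0 ↔ P = Q := by
  constructor
  · intro h0
    have hK1nn : (0:EReal) ≤ genKL P (midSet P Q) := genKL_nonneg hPne
    have hK2nn : (0:EReal) ≤ genKL Q (midSet P Q) := genKL_nonneg hQne
    have hhalf : (0:EReal) < ((1/2 : ℝ) : EReal) := by
      exact_mod_cast (by norm_num : (0:ℝ) < 1/2)
    have ha : (0:EReal) ≤ ((1/2 : ℝ) : EReal) * genKL P (midSet P Q) :=
      mul_nonneg hhalf.le hK1nn
    have hb : (0:EReal) ≤ ((1/2 : ℝ) : EReal) * genKL Q (midSet P Q) :=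
      mul_nonneg hhalf.le hK2nn
    rw [genJS] at h0
    have hK1 : genKL P (midSet P Q) = 0 := by
      by_contra hne
      have hpos : (0:EReal) < genKL P (midSet P Q) := lt_of_le_of_ne hK1nn (Ne.symm hne)
      have h1 : (0:EReal) < ((1/2 : ℝ) : EReal) * genKL P (midSet P Q) :=
        EReal.mul_pos hhalf hpos
      have : (0:EReal) < ((1/2 : ℝ) : EReal) * genKL P (midSet P Q)
          + ((1/2 : ℝ) : EReal) * genKL Q (midSet P Q) := by
        calc (0:EReal) < ((1/2 : ℝ) : EReal) * genKL P (midSet P Q) := h1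
          _ = ((1/2 : ℝ) : EReal) * genKL P (midSet P Q) + 0 := by rw [add_zero]
          _ ≤ _ := add_le_add_right hb _
      rw [h0] at this
      exact lt_irrefl _ this
    have hK2 : genKL Q (midSet P Q) = 0 := by
      by_contra hne
      have hpos : (0:EReal) < genKL Q (midSet P Q) := lt_of_le_of_ne hK2nn (Ne.symm hne)
      have h1 : (0:EReal) < ((1/2 : ℝ) : EReal) * genKL Q (midSet P Q) :=
        EReal.mul_pos hhalf hpos
      have : (0:EReal) < ((1/2 : ℝ) : EReal) * genKL P (midSet P Q)
          + ((1/2 : ℝ) : EReal) * genKL Q (midSet P Q) := by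
        calc (0:EReal) < ((1/2 : ℝ) : EReal) * genKL Q (midSet P Q) := h1
          _ = 0 + ((1/2 : ℝ) : EReal) * genKL Q (midSet P Q) := by rw [zero_add]
          _ ≤ _ := add_le_add_left ha _
      rw [h0] at this
      exact lt_irrefl _ this
    have hMc : IsCompact (midSet P Q) := isCompact_midSet hPc hQc
    have hPM : ∀ μ ∈ P, μ ∈ midSet P Q := by
      intro μ hμ
      apply mem_of_inf_klDiv_eq_zero hMc
      apply le_antisymm
      · rw [← hK1]
        exact le_iSup₂ (f := fun μ (_ : μ ∈ P) => ⨅ ν ∈ midSet P Q,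
          klDiv μ.toMeasure ν.toMeasure) μ hμ
      · exact le_iInf₂ fun ν _ => klDiv_nonneg'
    have hQM : ∀ ν ∈ Q, ν ∈ midSet P Q := by
      intro ν hν
      apply mem_of_inf_klDiv_eq_zero hMc
      apply le_antisymm
      · rw [← hK2]
        exact le_iSup₂ (f := fun μ (_ : μ ∈ Q) => ⨅ ν ∈ midSet P Q,
          klDiv μ.toMeasure ν.toMeasure) ν hν
      · exact le_iInf₂ fun ν _ => klDiv_nonneg'
    apply Set.Subset.antisymm
    · exact subset_of_mid_decomp hQne hQc hQconv (fun μ hμ => hPM μ hμ)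
    · refine subset_of_mid_decomp hPne hPc hPconv (fun ν hν => ?_)
      obtain ⟨mm, hmm, tt, htt, heq⟩ := hQM ν hν
      exact ⟨tt, htt, mm, hmm, by rw [heq, add_comm]⟩
  · intro hPQ
    subst hPQ
    have hmem : ∀ μ ∈ P, μ ∈ midSet P P := fun μ hμ =>
      ⟨μ, hμ, μ, hμ, by rw [← add_smul, ENNReal.inv_two_add_inv_two, one_smul]⟩
    have hK : genKL P (midSet P P) = 0 := by
      apply le_antisymm
      · exact iSup₂_le fun μ hμ => iInf₂_le_of_le μ (hmem μ hμ) (le_of_eq klDiv_self')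
      · exact genKL_nonneg hPne
    rw [genJS, hK]
    simp
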